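/- For all positive integers γ and δ there exists a constant C > 0 such that for every integer N ≥ 2 there exist (γ,δ)-free sets S_1, S_2, …, S_c ⊆ {1,2,…,N} with c ≤ 2^{C·√(log₂ N)} and S_1 ∪ S_2 ∪ ⋯ ∪ S_c = {1,2,…,N}. -/

import Mathlib

open Finset Real

/-- A set `X` of integers is `(γ,δ)`-free if no three distinct elements `a, b, c ∈ X`
satisfy `γ·a + δ·b = (γ+δ)·c`. -/
def IsFree (γ δ : ℤ) (X : Set ℤ) : Prop :=
  ¬ ∃ a ∈ X, ∃ b ∈ X, ∃ c ∈ X, a ≠ b ∧ a ≠ c ∧ b ≠ c ∧ γ * a + δ * b = (γ + δ) * c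

lemma isFree_mono {γ δ : ℤ} {X Y : Set ℤ} (h : Y ⊆ X) (hX : IsFree γ δ X) : IsFree γ δ Y := by
  rintro ⟨a, ha, b, hb, c, hc, h1, h2, h3, h4⟩
  exact hX ⟨a, h ha, b, h hb, c, h hc, h1, h2, h3, h4⟩

lemma isFree_translate {γ δ : ℤ} {X : Set ℤ} (t : ℤ) (hX : IsFree γ δ X) :
    IsFree γ δ ((· + t) '' X) := by
  rintro ⟨a, ⟨a', ha', rfl⟩, b, ⟨b', hb', rfl⟩, c, ⟨c', hc', rfl⟩, h1, h2, h3, h4⟩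
  refine hX ⟨a', ha', b', hb', c', hc', ?_, ?_, ?_, by ring_nf; ring_nf at h4; linarith⟩
  all_goals intro h; subst h; simp_all

lemma le_two_rpow {x : ℝ} (hx : 0 ≤ x) : x ≤ (2 : ℝ) ^ x := by
  have h2 : (0:ℝ) < 2 := by norm_num
  rw [Real.rpow_def_of_pos h2]
  have h := Real.add_one_le_exp (Real.log 2 * x / 2)
  have hsq : Real.exp (Real.log 2 * x) = (Real.exp (Real.log 2 * x / 2)) ^ 2 := by
    rw [← Real.exp_nat_mul]
    ring_nf
  rw [hsq]
  have hlog : 0.6931471803 < Real.log 2 := Real.log_two_gt_d9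
  have hnn : (0:ℝ) ≤ Real.log 2 * x / 2 + 1 := by positivity
  nlinarith [sq_nonneg (Real.log 2 * x / 2 + 1), sq_nonneg (Real.log 2 * x - 1), h]

lemma map_lt_pow {n d : ℕ} (hd : 0 < d) {x : Fin n → ℕ} (hx : ∀ i, x i < d) :
    Behrend.map d x < d ^ n := by
  induction n with
  | zero => simpa [Behrend.map] using Nat.one_pos
  | succ n ih =>
    rw [Behrend.map_succ']
    have h1 : x 0 < d := hx 0
    have h2 : Behrend.map d (x ∘ Fin.succ) < d ^ n := ih (fun i => hx i.succ)
    have h4 : Behrend.map d (x ∘ Fin.succ) * d ≤ (d ^ n - 1) * d :=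
      Nat.mul_le_mul_right d (Nat.le_sub_one_of_lt h2)
    have h3 : 1 ≤ d ^ n := Nat.one_le_pow _ _ hd
    have h6 : d + (d ^ n - 1) * d = d ^ n * d := by
      calc d + (d ^ n - 1) * d = (1 + (d ^ n - 1)) * d := by ring
        _ = d ^ n * d := by rw [show 1 + (d ^ n - 1) = d ^ n by omega]
    rw [pow_succ]
    omega

/-- The key geometric fact: on a sphere, the weighted equation forces equality. -/
lemma sphere_free {g e n d k : ℕ} (hg : 0 < g) (he : 0 < e) (hd : 0 < d)
    {x y z : Fin n → ℕ} (hx : x ∈ Behrend.sphere n d k) (hy : y ∈ Behrend.sphere n d k)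
    (hz : z ∈ Behrend.sphere n d k)
    (h : g * Behrend.map ((g + e) * d) x + e * Behrend.map ((g + e) * d) y
        = (g + e) * Behrend.map ((g + e) * d) z) : x = y ∧ x = z := by
  set D := (g + e) * d with hD
  have hxb := Behrend.mem_box.1 (Behrend.sphere_subset_box hx)
  have hyb := Behrend.mem_box.1 (Behrend.sphere_subset_box hy)
  have hzb := Behrend.mem_box.1 (Behrend.sphere_subset_box hz)
  have hw : 0 < g + e := by omega
  -- no carries: the digit vectors satisfy the equation pointwise
  have hmap : Behrend.map D (g • x + e • y) = Behrend.map D ((g + e) • z) := by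
    rw [map_add, AddMonoidHom.map_nsmul, AddMonoidHom.map_nsmul, AddMonoidHom.map_nsmul]
    simpa [nsmul_eq_mul] using h
  have hkey : g • x + e • y = (g + e) • z := by
    refine Behrend.map_injOn ?_ ?_ hmap
    · intro i
      simp only [Pi.add_apply, Pi.smul_apply, smul_eq_mul]
      have := hxb i; have := hyb i
      calc g * x i + e * y i ≤ g * (d-1) + e * (d-1) := by
            apply Nat.add_le_add <;> exact Nat.mul_le_mul_left _ (by omega)
        _ < (g + e) * d := by
            have hh : g * (d - 1) + e * (d - 1) = (g + e) * (d - 1) := by ring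
            rw [hh]
            exact (Nat.mul_lt_mul_left hw).2 (by omega)
    · intro i
      simp only [Pi.smul_apply, smul_eq_mul]
      have := hzb i
      calc (g + e) * z i ≤ (g + e) * (d - 1) := Nat.mul_le_mul_left _ (by omega)
        _ < (g + e) * d := (Nat.mul_lt_mul_left hw).2 (by omega)
  have hpt : ∀ i, g * x i + e * y i = (g + e) * z i := by
    intro i
    have := congrFun hkey i
    simpa [nsmul_eq_mul] using this
  have hxs : ∑ i, x i ^ 2 = k := (Finset.mem_filter.1 hx).2
  have hys : ∑ i, y i ^ 2 = k := (Finset.mem_filter.1 hy).2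
  have hzs : ∑ i, z i ^ 2 = k := (Finset.mem_filter.1 hz).2
  -- pass to ℤ
  have hxsZ : ∑ i, (x i : ℤ) ^ 2 = k := by exact_mod_cast congrArg (Nat.cast : ℕ → ℤ) hxs
  have hysZ : ∑ i, (y i : ℤ) ^ 2 = k := by exact_mod_cast congrArg (Nat.cast : ℕ → ℤ) hys
  have hzsZ : ∑ i, (z i : ℤ) ^ 2 = k := by exact_mod_cast congrArg (Nat.cast : ℕ → ℤ) hzs
  have hptZ : ∀ i, (g : ℤ) * x i + e * y i = ((g : ℤ) + e) * z i := by
    intro i; exact_mod_cast congrArg (Nat.cast : ℕ → ℤ) (hpt i)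
  have hxy : ∑ i, ((x i : ℤ) * y i) = k := by
    have e5 : ∑ i, ((g : ℤ) * x i + e * y i) ^ 2 = ((g : ℤ) + e) ^ 2 * k := by
      rw [Finset.sum_congr rfl fun i _ => by rw [hptZ i]]
      rw [Finset.sum_congr rfl fun i _ => (by ring : (((g:ℤ)+e) * z i)^2 = ((g:ℤ)+e)^2 * (z i)^2),
        ← Finset.mul_sum, hzsZ]
    have e6 : ∑ i, ((g : ℤ) * x i + e * y i) ^ 2
        = (g:ℤ)^2 * k + (e:ℤ)^2 * k + 2*g*e * ∑ i, ((x i : ℤ) * y i) := by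
      rw [Finset.sum_congr rfl fun i _ => (by ring :
        ((g:ℤ) * x i + e * y i)^2 = (g:ℤ)^2 * (x i:ℤ)^2 + (e:ℤ)^2 * (y i:ℤ)^2
          + 2*g*e*((x i : ℤ) * y i))]
      rw [Finset.sum_add_distrib, Finset.sum_add_distrib, ← Finset.mul_sum, ← Finset.mul_sum,
        ← Finset.mul_sum, hxsZ, hysZ]
    have hge : (0:ℤ) < 2 * g * e := by positivity
    have : 2*(g:ℤ)*e * ∑ i, ((x i : ℤ) * y i) = 2*(g:ℤ)*e * k := by
      rw [e6] at e5; ring_nf at e5 ⊢; linarith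
    exact mul_left_cancel₀ hge.ne' this
  have hxyeq : x = y := by
    have h0 : ∑ i, ((x i : ℤ) - y i) ^ 2 = 0 := by
      rw [Finset.sum_congr rfl fun i _ => (by ring :
        ((x i : ℤ) - y i)^2 = (x i:ℤ)^2 + (y i:ℤ)^2 - 2 * ((x i:ℤ) * y i))]
      rw [Finset.sum_sub_distrib, Finset.sum_add_distrib, ← Finset.mul_sum, hxsZ, hysZ, hxy]
      ring
    funext i
    have hzero := (Finset.sum_eq_zero_iff_of_nonneg (fun i _ => sq_nonneg _)).1 h0 i
      (Finset.mem_univ i)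
    have hxiy : (x i : ℤ) = y i := by nlinarith [hzero]
    exact_mod_cast hxiy
  refine ⟨hxyeq, ?_⟩
  funext i
  have hpi := hpt i
  rw [← hxyeq] at hpi
  have hmm : (g + e) * x i = (g + e) * z i := by rw [add_mul]; exact hpi
  exact Nat.eq_of_mul_eq_mul_left hw hmm

lemma exists_good_translate (N : ℕ) (hN : 1 ≤ N) (A U : Finset ℤ)
    (hA : A ⊆ Finset.Icc (1 : ℤ) N) (hU : U ⊆ Finset.Icc (1 : ℤ) N) :
    ∃ t : ℤ, A.card * U.card ≤ 2 * N * (U.filter (fun u => u - t ∈ A)).card := by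
  set T : Finset ℤ := Finset.Icc (1 - (N : ℤ)) ((N : ℤ) - 1) with hT
  have hTcard : T.card ≤ 2 * N := by
    rw [hT, Int.card_Icc]
    omega
  have hsum : ∑ t ∈ T, (U.filter (fun u => u - t ∈ A)).card = U.card * A.card := by
    simp_rw [Finset.card_filter]
    rw [Finset.sum_comm]
    have hfib : ∀ u ∈ U, ∑ t ∈ T, (if u - t ∈ A then 1 else 0) = A.card := by
      intro u hu
      have huI := Finset.mem_Icc.1 (hU hu)
      rw [← Finset.card_filter]
      have : T.filter (fun t => u - t ∈ A) = A.image (fun a => u - a) := by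
        ext t
        simp only [Finset.mem_filter, Finset.mem_image, hT, Finset.mem_Icc]
        constructor
        · rintro ⟨ht, hta⟩
          exact ⟨u - t, hta, by ring⟩
        · rintro ⟨a, ha, rfl⟩
          have haI := Finset.mem_Icc.1 (hA ha)
          refine ⟨⟨by omega, by omega⟩, by simpa using ha⟩
      rw [this, Finset.card_image_of_injective _ (fun a b h => by omega)]
    rw [Finset.sum_congr rfl hfib, Finset.sum_const, smul_eq_mul, mul_comm]
  by_contra hcon
  push_neg at hcon
  rcases Nat.eq_zero_or_pos (A.card * U.card) with h0 | hpos
  · exact absurd (h0 ▸ Nat.zero_le _) (not_le.2 (hcon 0))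
  have hstep : ∀ t ∈ T, (U.filter (fun u => u - t ∈ A)).card * (2 * N)
      ≤ A.card * U.card - 1 := by
    intro t _
    have h := hcon t
    rw [mul_comm]
    exact Nat.le_sub_one_of_lt h
  have heq : U.card * A.card * (2 * N) = ∑ t ∈ T, (U.filter (fun u => u - t ∈ A)).card * (2*N) := by
    rw [← Finset.sum_mul, hsum]
  have hle : ∑ t ∈ T, (U.filter (fun u => u - t ∈ A)).card * (2 * N)
      ≤ T.card * (A.card * U.card - 1) := Finset.sum_le_card_nsmul _ _ _ hstep
  have h2 : T.card * (A.card * U.card - 1) ≤ 2 * N * (A.card * U.card - 1) :=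
    Nat.mul_le_mul_right _ hTcard
  have h3 : 2 * N * (A.card * U.card - 1) < 2 * N * (A.card * U.card) :=
    (Nat.mul_lt_mul_left (by omega)).2 (Nat.sub_lt hpos Nat.one_pos)
  have hfin : 2 * N * (A.card * U.card) ≤ 2 * N * (A.card * U.card - 1) := by
    calc 2 * N * (A.card * U.card) = U.card * A.card * (2 * N) := by ring
      _ = ∑ t ∈ T, (U.filter (fun u => u - t ∈ A)).card * (2 * N) := heq
      _ ≤ T.card * (A.card * U.card - 1) := hle
      _ ≤ 2 * N * (A.card * U.card - 1) := h2
  exact Nat.lt_irrefl _ (hfin.trans_lt h3)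

lemma cover_aux (N : ℕ) (hN : 1 ≤ N) (A : Finset ℤ) (hA : A ⊆ Finset.Icc (1 : ℤ) N)
    (hA0 : 0 < A.card) :
    ∀ m : ℕ, ∀ U : Finset ℤ, U ⊆ Finset.Icc (1 : ℤ) N →
      (U.card : ℝ) * (1 - (A.card : ℝ) / (2 * N)) ^ m < 1 →
      ∃ T : Finset ℤ, T.card ≤ m ∧ ∀ u ∈ U, ∃ t ∈ T, u - t ∈ A := by
  have hρpos : (0:ℝ) < (A.card : ℝ) / (2 * N) := by positivity
  have hcardIcc : (Finset.Icc (1:ℤ) (N:ℤ)).card = N := by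
    rw [Int.card_Icc]; omega
  have hρle : (A.card : ℝ) / (2 * N) ≤ 1 := by
    have : A.card ≤ N := hcardIcc ▸ Finset.card_le_card hA
    rw [div_le_one (by positivity)]
    have : (A.card : ℝ) ≤ N := by exact_mod_cast this
    linarith
  intro m
  induction m with
  | zero =>
    intro U hU hcard
    rw [pow_zero, mul_one] at hcard
    have : U.card = 0 := by exact_mod_cast Nat.lt_one_iff.1 (by exact_mod_cast hcard)
    refine ⟨∅, le_refl _, fun u hu => absurd hu ?_⟩
    simp [Finset.card_eq_zero.1 this]
  | succ m ih =>
    intro U hU hcard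
    obtain ⟨t, ht⟩ := exists_good_translate N hN A U hA hU
    set U' := U.filter (fun u => ¬ (u - t ∈ A)) with hU'
    have hsplit : (U.filter (fun u => u - t ∈ A)).card + U'.card = U.card := by
      rw [hU']; exact Finset.card_filter_add_card_filter_not _
    have hcnt : (U.card : ℝ) * ((A.card : ℝ) / (2 * N))
        ≤ ((U.filter (fun u => u - t ∈ A)).card : ℝ) := by
      rw [← mul_div_assoc, div_le_iff₀ (by positivity)]
      have h := (Nat.cast_le (α := ℝ)).2 ht
      push_cast at h
      linarith
    have hU'le : (U'.card : ℝ) ≤ (U.card : ℝ) * (1 - (A.card : ℝ) / (2 * N)) := by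
      have : (U'.card : ℝ) = (U.card : ℝ) - (U.filter (fun u => u - t ∈ A)).card := by
        rw [← hsplit]; push_cast; ring
      rw [this, mul_one_sub]
      linarith
    have hpow : (0:ℝ) ≤ (1 - (A.card : ℝ) / (2 * N)) ^ m := by
      apply pow_nonneg; linarith
    obtain ⟨T, hT1, hT2⟩ := ih U' ((Finset.filter_subset _ _).trans hU) (by
      calc (U'.card : ℝ) * (1 - (A.card : ℝ) / (2 * N)) ^ m
          ≤ (U.card : ℝ) * (1 - (A.card : ℝ) / (2 * N)) * (1 - (A.card : ℝ) / (2 * N)) ^ m := by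
            apply mul_le_mul_of_nonneg_right hU'le hpow
        _ = (U.card : ℝ) * (1 - (A.card : ℝ) / (2 * N)) ^ (m + 1) := by ring
        _ < 1 := hcard)
    refine ⟨insert t T, ?_, fun u hu => ?_⟩
    · exact (Finset.card_insert_le _ _).trans (by omega)
    · by_cases hmem : u - t ∈ A
      · exact ⟨t, Finset.mem_insert_self _ _, hmem⟩
      · obtain ⟨t', ht'1, ht'2⟩ := hT2 u (Finset.mem_filter.2 ⟨hu, hmem⟩)
        exact ⟨t', Finset.mem_insert_of_mem ht'1, ht'2⟩

lemma exists_dense_free (γ δ : ℤ) (hγ : 0 < γ) (hδ : 0 < δ) (N : ℕ) (hN : 2 ≤ N)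
    (hL : ((γ.toNat + δ.toNat : ℕ) : ℝ) + 10 ≤ Real.sqrt (Real.logb 2 N)) :
    ∃ A : Finset ℤ, A ⊆ Finset.Icc (1 : ℤ) (N : ℤ) ∧ IsFree γ δ ↑A ∧
      (N : ℝ) * 2 ^ (-((4 * ((γ.toNat + δ.toNat : ℕ) : ℝ) + 4) * Real.sqrt (Real.logb 2 N)))
        ≤ A.card := by
  have hg : 0 < γ.toNat := by omega
  have he : 0 < δ.toNat := by omega
  set g := γ.toNat with hgdef
  set e := δ.toNat with hedef
  set w := g + e with hwdef
  have hw2 : 2 ≤ w := by omega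
  set L := Real.logb 2 N with hLdef
  set s := Real.sqrt L with hsdef
  have hN0 : (0:ℝ) < N := by positivity
  have hN2 : (2:ℝ) ≤ N := by exact_mod_cast hN
  have hL1 : 1 ≤ L := by
    rw [hLdef, show (1:ℝ) = Real.logb 2 2 by simp]
    exact Real.logb_le_logb_of_le (by norm_num) (by norm_num) hN2
  have hL0 : (0:ℝ) ≤ L := by linarith
  have hs1 : 1 ≤ s := by
    rw [hsdef, show (1:ℝ) = Real.sqrt 1 by simp]
    exact Real.sqrt_le_sqrt hL1
  have hsw : (w:ℝ) + 10 ≤ s := by push_cast at hL ⊢; exact hL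
  have hss : s * s = L := Real.mul_self_sqrt hL0
  set n := ⌈s⌉₊ with hndef
  have hn1 : 1 ≤ n := Nat.one_le_iff_ne_zero.2 (by
    have : 0 < n := Nat.ceil_pos.2 (by linarith)
    omega)
  have hns : s ≤ n := Nat.le_ceil s
  have hn_ub : (n:ℝ) ≤ s + 1 := (Nat.ceil_lt_add_one (by linarith)).le
  have hn0 : (0:ℝ) < n := by exact_mod_cast hn1
  set X := (N:ℝ) ^ ((n:ℝ)⁻¹) with hXdef
  have hNeq : (2:ℝ) ^ L = N := Real.rpow_logb (by norm_num) (by norm_num) hN0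
  have hX2 : X = (2:ℝ) ^ (L / n) := by
    rw [hXdef, ← hNeq, ← Real.rpow_mul (by norm_num), div_eq_mul_inv]
  have hLn_ub : L / n ≤ s := by
    rw [div_le_iff₀ hn0]
    nlinarith
  have hLn_lb : s - 1 ≤ L / n := by
    rw [le_div_iff₀ hn0]
    nlinarith
  have hX_ub : X ≤ (2:ℝ) ^ s := by
    rw [hX2]; exact Real.rpow_le_rpow_of_exponent_le one_le_two hLn_ub
  have hX_lb : (2:ℝ) ^ (s - 1) ≤ X := by
    rw [hX2]; exact Real.rpow_le_rpow_of_exponent_le one_le_two hLn_lb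
  have hX0 : (0:ℝ) < X := by rw [hX2]; positivity
  have hpow_w : 4 * (w:ℝ) + 4 ≤ (2:ℝ) ^ (s - 1) := by
    have h1 : ((w:ℝ)) + 9 ≤ s - 1 := by linarith
    have h2 : (2:ℝ) ^ ((w:ℝ) + 9) ≤ (2:ℝ) ^ (s - 1) :=
      Real.rpow_le_rpow_of_exponent_le one_le_two h1
    have h3 : 4 * (w:ℝ) + 4 ≤ (2:ℝ) ^ ((w:ℝ) + 9) := by
      have hnat : 4 * w + 4 ≤ 2 ^ (w + 9) := by
        have hlt : w + 1 ≤ 2 ^ w := Nat.lt_two_pow_self (n := w)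
        calc 4 * w + 4 ≤ 512 * (w + 1) := by omega
          _ ≤ 512 * 2 ^ w := Nat.mul_le_mul_left _ hlt
          _ = 2 ^ (w + 9) := by rw [pow_add]; ring
      have := (Nat.cast_le (α := ℝ)).2 hnat
      push_cast at this
      calc 4 * (w:ℝ) + 4 ≤ ((2:ℝ)) ^ (w + 9 : ℕ) := by push_cast; linarith
        _ = (2:ℝ) ^ ((w:ℝ) + 9) := by
          rw [← Real.rpow_natCast (2:ℝ) (w + 9)]; push_cast; ring_nf
    linarith
  have hX4w : 4 * (w:ℝ) + 4 ≤ X := hpow_w.trans hX_lb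
  set M := ⌊X⌋₊ with hMdef
  set d := M / w with hddef
  have hMX : (M:ℝ) ≤ X := Nat.floor_le hX0.le
  have hXM : X < M + 1 := Nat.lt_floor_add_one X
  have hwM : w ≤ M := by
    have : (w:ℝ) ≤ M := by push_cast; linarith
    exact_mod_cast this
  have hd1 : 1 ≤ d := (Nat.le_div_iff_mul_le (by omega)).2 (by omega)
  have hdM : (M:ℝ) < w * d + w := by
    have h : w * d + M % w = M := by rw [hddef]; exact Nat.div_add_mod M w
    have hmod : M % w < w := Nat.mod_lt _ (by omega)
    have : M < w * d + w := by omega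
    exact_mod_cast this
  have hd_lb : X / (2 * w) ≤ (d:ℝ) := by
    rw [div_le_iff₀ (by positivity)]
    have h1d : (1:ℝ) ≤ (d:ℝ) := by exact_mod_cast hd1
    have hwd : (w:ℝ) ≤ (w:ℝ) * d := le_mul_of_one_le_right (by positivity) h1d
    linarith
  set D := w * d with hDdef
  have hD0 : 0 < D := Nat.mul_pos (by omega) hd1
  have hDX : (D:ℝ) ≤ X := by
    have : D ≤ M := by
      rw [hDdef, hddef, mul_comm]
      exact Nat.div_mul_le_self M w
    calc (D:ℝ) ≤ M := by exact_mod_cast this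
      _ ≤ X := hMX
  have hXn : X ^ (n : ℕ) = (N:ℝ) := by
    rw [hXdef, ← Real.rpow_natCast ((N:ℝ) ^ ((n:ℝ)⁻¹)) n, ← Real.rpow_mul hN0.le,
      inv_mul_cancel₀ (by positivity), Real.rpow_one]
  have hDn : D ^ n ≤ N := by
    have hreal : ((D:ℝ)) ^ n ≤ (N:ℝ) := by
      calc ((D:ℝ)) ^ n ≤ X ^ n := pow_le_pow_left₀ (by positivity) hDX n
        _ = (N:ℝ) := hXn
    exact_mod_cast hreal
  obtain ⟨k, hk⟩ := Behrend.exists_large_sphere n d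
  have hdD : d ≤ D := Nat.le_mul_of_pos_left d (by omega)
  have hboxD : ∀ v ∈ Behrend.sphere n d k, ∀ i, v i < D := fun v hv i =>
    lt_of_lt_of_le (Behrend.mem_box.1 (Behrend.sphere_subset_box hv) i) hdD
  have hinj : Set.InjOn (fun v => ((Behrend.map D v : ℕ) : ℤ) + 1)
      (Behrend.sphere n d k : Set (Fin n → ℕ)) := by
    intro u hu v hv huv
    apply Behrend.map_injOn (fun i => hboxD u hu i) (fun i => hboxD v hv i)
    have : ((Behrend.map D u : ℕ) : ℤ) = ((Behrend.map D v : ℕ) : ℤ) := by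
      simpa using huv
    exact_mod_cast this
  set A := (Behrend.sphere n d k).image (fun v => ((Behrend.map D v : ℕ) : ℤ) + 1) with hAdef
  have hcard : A.card = (Behrend.sphere n d k).card := Finset.card_image_of_injOn hinj
  have hsub : A ⊆ Finset.Icc (1 : ℤ) (N : ℤ) := by
    intro a ha
    rw [hAdef, Finset.mem_image] at ha
    obtain ⟨v, hv, rfl⟩ := ha
    have hlt : Behrend.map D v < D ^ n := map_lt_pow hD0 (hboxD v hv)
    have : Behrend.map D v + 1 ≤ N := by omega
    rw [Finset.mem_Icc]
    constructor
    · omega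
    · exact_mod_cast this
  have hfree : IsFree γ δ ↑A := by
    rintro ⟨a, ha, b, hb, c, hc, hab, hac, hbc, heq⟩
    rw [hAdef, Finset.coe_image, Set.mem_image] at ha hb hc
    obtain ⟨x, hx, rfl⟩ := ha
    obtain ⟨y, hy, rfl⟩ := hb
    obtain ⟨z, hz, rfl⟩ := hc
    have hγg : γ = (g : ℤ) := by omega
    have hδe : δ = (e : ℤ) := by omega
    have hZeq : (g:ℤ) * (Behrend.map D x : ℕ) + (e:ℤ) * (Behrend.map D y : ℕ)
        = ((g:ℤ) + e) * (Behrend.map D z : ℕ) := by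
      rw [hγg, hδe] at heq
      ring_nf at heq ⊢
      linarith
    have hNateq : g * Behrend.map D x + e * Behrend.map D y
        = (g + e) * Behrend.map D z := by exact_mod_cast hZeq
    have hDge : D = (g + e) * d := by rw [hDdef, hwdef]
    obtain ⟨hxy, -⟩ := sphere_free hg he (by omega) hx hy hz (by rw [← hDge]; exact hNateq)
    exact hab (by rw [hxy])
  refine ⟨A, hsub, hfree, ?_⟩
  -- density computation
  have hkR : ((d:ℝ)) ^ n / ((n:ℝ) * (d:ℝ) ^ 2) ≤ (A.card : ℝ) := by
    rw [hcard]
    have := hk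
    push_cast at this ⊢
    convert this using 2 <;> push_cast <;> ring
  set K := 4 * (w:ℝ) + 4 with hKdef
  have h2w0 : (0:ℝ) < 2 * w := by positivity
  have hdn_lb : (N:ℝ) / (2 * w) ^ n ≤ (d:ℝ) ^ n := by
    have h1 : (X / (2 * w)) ^ n ≤ (d:ℝ) ^ n := pow_le_pow_left₀ (by positivity) hd_lb n
    calc (N:ℝ) / (2 * w) ^ n = (X / (2 * w)) ^ n := by rw [div_pow, hXn]
      _ ≤ (d:ℝ) ^ n := h1
  have hdX : (d:ℝ) ≤ X := by
    have : d ≤ M := Nat.div_le_self M w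
    calc (d:ℝ) ≤ M := by exact_mod_cast this
      _ ≤ X := hMX
  -- the three bounds
  have hb1 : ((2 * w : ℝ)) ^ n ≤ (2:ℝ) ^ (4 * (w:ℝ) * s) := by
    have hnat : (2 * w) ^ n ≤ 2 ^ (2 * w * n) := by
      calc (2 * w) ^ n ≤ (2 ^ (2 * w)) ^ n :=
            Nat.pow_le_pow_left (le_of_lt (Nat.lt_two_pow_self (n := 2 * w))) n
        _ = 2 ^ (2 * w * n) := by rw [← pow_mul]
    have hcast := (Nat.cast_le (α := ℝ)).2 hnat
    push_cast at hcast
    calc ((2 * w : ℝ)) ^ n ≤ ((2:ℝ)) ^ (2 * w * n : ℕ) := by push_cast; linarith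
      _ = (2:ℝ) ^ ((2 * w * n : ℕ) : ℝ) := by rw [Real.rpow_natCast]
      _ ≤ (2:ℝ) ^ (4 * (w:ℝ) * s) := by
          apply Real.rpow_le_rpow_of_exponent_le one_le_two
          push_cast
          have h1 : (n:ℝ) ≤ 2 * s := by linarith
          have h2 := mul_le_mul_of_nonneg_left h1 (show (0:ℝ) ≤ 2 * (w:ℝ) by positivity)
          linarith
  have hb2 : (n:ℝ) ≤ (2:ℝ) ^ (2 * s) := by
    have := le_two_rpow (show (0:ℝ) ≤ 2 * s by linarith)
    calc (n:ℝ) ≤ s + 1 := hn_ub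
      _ ≤ 2 * s := by linarith
      _ ≤ (2:ℝ) ^ (2 * s) := this
  have hb3 : (d:ℝ) ^ 2 ≤ (2:ℝ) ^ (2 * s) := by
    have h1 : (d:ℝ) ^ 2 ≤ ((2:ℝ) ^ s) ^ 2 := by
      apply pow_le_pow_left₀ (by positivity) (hdX.trans hX_ub)
    calc (d:ℝ) ^ 2 ≤ ((2:ℝ) ^ s) ^ 2 := h1
      _ = (2:ℝ) ^ (2 * s) := by
          rw [← Real.rpow_natCast ((2:ℝ) ^ s) 2, ← Real.rpow_mul (by norm_num)]
          norm_num
          ring_nf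
  have key : ((2 * w : ℝ)) ^ n * ((n:ℝ) * (d:ℝ) ^ 2) ≤ (2:ℝ) ^ (K * s) := by
    calc ((2 * w : ℝ)) ^ n * ((n:ℝ) * (d:ℝ) ^ 2)
        ≤ (2:ℝ) ^ (4 * (w:ℝ) * s) * ((2:ℝ) ^ (2 * s) * (2:ℝ) ^ (2 * s)) := by
          apply mul_le_mul hb1 (mul_le_mul hb2 hb3 (by positivity) (by positivity))
            (by positivity) (by positivity)
      _ = (2:ℝ) ^ (4 * (w:ℝ) * s + (2 * s + 2 * s)) := by
          rw [← Real.rpow_add (by norm_num), ← Real.rpow_add (by norm_num)]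
      _ = (2:ℝ) ^ (K * s) := by rw [hKdef]; ring_nf
  have hnd2pos : (0:ℝ) < (n:ℝ) * (d:ℝ) ^ 2 := by
    have : (0:ℝ) < (d:ℝ) := by exact_mod_cast hd1
    positivity
  have hfinal : (N:ℝ) * 2 ^ (-(K * s)) ≤ (d:ℝ) ^ n / ((n:ℝ) * (d:ℝ) ^ 2) := by
    rw [le_div_iff₀ hnd2pos]
    have hcancel : (2:ℝ) ^ (-(K * s)) * (2:ℝ) ^ (K * s) = 1 := by
      rw [← Real.rpow_add (by norm_num)]; simp
    have hstep : (n:ℝ) * (d:ℝ) ^ 2 ≤ (2:ℝ) ^ (K * s) / (2 * w : ℝ) ^ n := by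
      rw [le_div_iff₀ (by positivity)]
      calc (n:ℝ) * (d:ℝ) ^ 2 * (2 * w : ℝ) ^ n
          = ((2 * w : ℝ)) ^ n * ((n:ℝ) * (d:ℝ) ^ 2) := by ring
        _ ≤ (2:ℝ) ^ (K * s) := key
    calc (N:ℝ) * 2 ^ (-(K * s)) * ((n:ℝ) * (d:ℝ) ^ 2)
        ≤ (N:ℝ) * 2 ^ (-(K * s)) * ((2:ℝ) ^ (K * s) / (2 * w : ℝ) ^ n) := by
          apply mul_le_mul_of_nonneg_left hstep (by positivity)
      _ = (N:ℝ) * (((2:ℝ) ^ (-(K * s)) * (2:ℝ) ^ (K * s)) / (2 * w : ℝ) ^ n) := by ring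
      _ = (N:ℝ) / (2 * w : ℝ) ^ n := by rw [hcancel, mul_one_div]
      _ ≤ (d:ℝ) ^ n := hdn_lb
  calc (N:ℝ) * 2 ^ (-((4 * ((γ.toNat + δ.toNat : ℕ) : ℝ) + 4) * s))
      = (N:ℝ) * 2 ^ (-(K * s)) := by rw [hKdef]
    _ ≤ (d:ℝ) ^ n / ((n:ℝ) * (d:ℝ) ^ 2) := hfinal
    _ ≤ (A.card : ℝ) := hkR

theorem stmt_7 (γ δ : ℤ) (hγ : 0 < γ) (hδ : 0 < δ) :
    ∃ C : ℝ, 0 < C ∧ ∀ N : ℕ, 2 ≤ N →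
      ∃ c : ℕ, (c : ℝ) ≤ 2 ^ (C * Real.sqrt (Real.logb 2 N)) ∧
        ∃ S : Fin c → Finset ℤ,
          (∀ i, S i ⊆ Finset.Icc (1 : ℤ) (N : ℤ) ∧ IsFree γ δ ↑(S i)) ∧
          Finset.univ.biUnion S = Finset.Icc (1 : ℤ) (N : ℤ) := by
  set w := γ.toNat + δ.toNat with hwdef
  set C := 5 * (w : ℝ) + 20 with hCdef
  have hw0 : (0:ℝ) ≤ (w:ℝ) := by positivity
  refine ⟨C, by positivity, fun N hN => ?_⟩
  set L := Real.logb 2 N with hLdef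
  set s := Real.sqrt L with hsdef
  have hN0 : (0:ℝ) < N := by positivity
  have hN2 : (2:ℝ) ≤ N := by exact_mod_cast hN
  have hL1 : 1 ≤ L := by
    rw [hLdef, show (1:ℝ) = Real.logb 2 2 by simp]
    exact Real.logb_le_logb_of_le (by norm_num) (by norm_num) hN2
  have hL0 : (0:ℝ) ≤ L := by linarith
  have hs1 : 1 ≤ s := by
    rw [hsdef, show (1:ℝ) = Real.sqrt 1 by simp]
    exact Real.sqrt_le_sqrt hL1
  have hs0 : (0:ℝ) ≤ s := by linarith
  have hss : s * s = L := Real.mul_self_sqrt hL0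
  have hNeq : (2:ℝ) ^ L = N := Real.rpow_logb (by norm_num) (by norm_num) hN0
  have hcardIcc : (Finset.Icc (1:ℤ) (N:ℤ)).card = N := by
    rw [Int.card_Icc]; omega
  by_cases hcase : s ≤ C
  · -- trivial cover by singletons
    refine ⟨N, ?_, fun i => {((i : ℕ) : ℤ) + 1}, fun i => ⟨?_, ?_⟩, ?_⟩
    · calc (N:ℝ) = (2:ℝ) ^ L := hNeq.symm
        _ ≤ (2:ℝ) ^ (C * s) := by
          apply Real.rpow_le_rpow_of_exponent_le one_le_two
          calc L = s * s := hss.symm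
            _ ≤ C * s := mul_le_mul_of_nonneg_right hcase hs0
    · rw [Finset.singleton_subset_iff, Finset.mem_Icc]
      have := i.isLt
      omega
    · rintro ⟨a, ha, b, hb, c', hc', hab, -, -, -⟩
      simp only [Finset.coe_singleton, Set.mem_singleton_iff] at ha hb
      exact hab (ha.trans hb.symm)
    · ext v
      simp only [Finset.mem_biUnion, Finset.mem_univ, true_and, Finset.mem_singleton,
        Finset.mem_Icc]
      constructor
      · rintro ⟨i, rfl⟩
        have := i.isLt
        omega
      · rintro ⟨h1, h2⟩
        refine ⟨⟨(v - 1).toNat, by omega⟩, ?_⟩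
        simp only []
        omega
  · push_neg at hcase
    have hsB : (w:ℝ) + 10 ≤ s := by rw [hCdef] at hcase; linarith
    obtain ⟨A, hA1, hA2, hA3⟩ := exists_dense_free γ δ hγ hδ N hN (by exact hsB)
    set K := 4 * (w:ℝ) + 4 with hKdef
    have hA3' : (N:ℝ) * 2 ^ (-(K * s)) ≤ A.card := by
      rw [hKdef]
      convert hA3 using 4 <;> rw [hwdef, hsdef, hLdef]
    have hApos : 0 < A.card := by
      have h : (0:ℝ) < (A.card : ℝ) := lt_of_lt_of_le (by positivity) hA3'
      exact_mod_cast h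
    set ρ := (A.card : ℝ) / (2 * N) with hρdef
    have hρpos : (0:ℝ) < ρ := by positivity
    have hρle : ρ ≤ 1 := by
      have hcard : A.card ≤ N := hcardIcc ▸ Finset.card_le_card hA1
      have : (A.card : ℝ) ≤ N := by exact_mod_cast hcard
      rw [hρdef, div_le_one (by positivity)]
      linarith
    set m := ⌈(Real.log N + 1) / ρ⌉₊ with hmdef
    have hm1 : Real.log N + 1 ≤ ρ * m := by
      have h := Nat.le_ceil ((Real.log N + 1) / ρ)
      rw [div_le_iff₀ hρpos] at h
      linarith
    have hmain : ((Finset.Icc (1:ℤ) (N:ℤ)).card : ℝ) * (1 - ρ) ^ m < 1 := by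
      rw [hcardIcc]
      have h2 : 1 - ρ ≤ Real.exp (-ρ) := by
        have := Real.add_one_le_exp (-ρ)
        linarith
      have h2' : (0:ℝ) ≤ 1 - ρ := by linarith
      have h3 : (1 - ρ) ^ m ≤ Real.exp (-ρ) ^ m := pow_le_pow_left₀ h2' h2 m
      have h4 : Real.exp (-ρ) ^ m = Real.exp (-(ρ * m)) := by
        rw [← Real.exp_nat_mul]; ring_nf
      have h5 : Real.exp (-(ρ * m)) ≤ Real.exp (-(Real.log N + 1)) :=
        Real.exp_le_exp.2 (by linarith)
      have h6 : (N:ℝ) * Real.exp (-(Real.log N + 1)) < 1 := by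
        rw [show -(Real.log N + 1) = -Real.log N + (-1) by ring, Real.exp_add, Real.exp_neg,
          Real.exp_log hN0]
        have hlt : Real.exp (-1) < 1 := by
          rw [show (1:ℝ) = Real.exp 0 by simp]
          exact Real.exp_lt_exp.2 (by norm_num)
        calc (N:ℝ) * ((N:ℝ)⁻¹ * Real.exp (-1)) = Real.exp (-1) := by field_simp
          _ < 1 := hlt
      calc (N:ℝ) * (1 - ρ) ^ m ≤ (N:ℝ) * Real.exp (-(ρ * m)) := by
            rw [← h4]; exact mul_le_mul_of_nonneg_left h3 hN0.le
        _ ≤ (N:ℝ) * Real.exp (-(Real.log N + 1)) := mul_le_mul_of_nonneg_left h5 hN0.le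
        _ < 1 := h6
    obtain ⟨T, hT1, hT2⟩ := cover_aux N (by omega) A hA1 hApos m (Finset.Icc 1 N)
      subset_rfl hmain
    -- bound on m
    have hexp_pos : (0:ℝ) < (2:ℝ) ^ (K * s) := by positivity
    have hρ_lb : (2:ℝ) ^ (-(K * s)) / 2 ≤ ρ := by
      rw [hρdef]
      calc (2:ℝ) ^ (-(K * s)) / 2 = (N:ℝ) * 2 ^ (-(K * s)) / (2 * N) := by
            rw [div_eq_div_iff (by norm_num) (by positivity)]
            ring
        _ ≤ (A.card : ℝ) / (2 * N) := by
            apply div_le_div_of_nonneg_right hA3' (by positivity)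
    have hlogN : Real.log N ≤ L := by
      have hlog2 : Real.log 2 ≤ 1 := by
        have := Real.log_le_sub_one_of_pos (show (0:ℝ) < 2 by norm_num)
        linarith
      have heq : Real.log N = L * Real.log 2 := by
        rw [hLdef, Real.logb, div_mul_cancel₀]
        exact (Real.log_pos one_lt_two).ne'
      rw [heq]
      calc L * Real.log 2 ≤ L * 1 := mul_le_mul_of_nonneg_left hlog2 hL0
        _ = L := mul_one L
    have hL2s : L ≤ (2:ℝ) ^ (2 * s) := by
      have h1 : s ≤ (2:ℝ) ^ s := le_two_rpow hs0
      have h2 : L = s * s := hss.symm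
      calc L = s * s := h2
        _ ≤ (2:ℝ) ^ s * (2:ℝ) ^ s := mul_le_mul h1 h1 hs0 (by positivity)
        _ = (2:ℝ) ^ (s + s) := (Real.rpow_add (by norm_num) _ _).symm
        _ = (2:ℝ) ^ (2 * s) := by ring_nf
    have hmR : (m : ℝ) < (Real.log N + 1) / ρ + 1 := Nat.ceil_lt_add_one (by positivity)
    have hinv : 1 / ρ ≤ 2 * (2:ℝ) ^ (K * s) := by
      rw [div_le_iff₀ hρpos]
      have h := mul_le_mul_of_nonneg_left hρ_lb (show (0:ℝ) ≤ 2 * (2:ℝ) ^ (K * s) by positivity)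
      have hcancel : 2 * (2:ℝ) ^ (K * s) * ((2:ℝ) ^ (-(K * s)) / 2) = 1 := by
        rw [div_eq_mul_inv]
        rw [show 2 * (2:ℝ) ^ (K * s) * ((2:ℝ) ^ (-(K * s)) * 2⁻¹)
          = ((2:ℝ) ^ (K * s) * (2:ℝ) ^ (-(K * s))) * (2 * 2⁻¹) by ring]
        rw [← Real.rpow_add (by norm_num)]
        norm_num
      linarith
    have hmbound : (m : ℝ) ≤ (2:ℝ) ^ (C * s) := by
      have hnum : Real.log N + 1 ≤ 2 * (2:ℝ) ^ (2 * s) := by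
        have h1 : (1:ℝ) ≤ (2:ℝ) ^ (2 * s) := by
          rw [show (1:ℝ) = (2:ℝ) ^ (0:ℝ) by simp]
          exact Real.rpow_le_rpow_of_exponent_le one_le_two (by positivity)
        linarith
      have hstep : (Real.log N + 1) / ρ ≤ (2 * (2:ℝ) ^ (2 * s)) * (2 * (2:ℝ) ^ (K * s)) := by
        rw [div_eq_mul_one_div]
        apply mul_le_mul hnum hinv (by positivity) (by positivity)
      have hcomb : (m : ℝ) ≤ 4 * (2:ℝ) ^ (2 * s) * (2:ℝ) ^ (K * s) + 1 := by
        have : (2 * (2:ℝ) ^ (2 * s)) * (2 * (2:ℝ) ^ (K * s))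
            = 4 * (2:ℝ) ^ (2 * s) * (2:ℝ) ^ (K * s) := by ring
        linarith [hmR, hstep]
      have h1 : (1:ℝ) ≤ (2:ℝ) ^ (2 * s) * (2:ℝ) ^ (K * s) := by
        rw [← Real.rpow_add (by norm_num)]
        rw [show (1:ℝ) = (2:ℝ) ^ (0:ℝ) by simp]
        apply Real.rpow_le_rpow_of_exponent_le one_le_two
        have hK0 : (0:ℝ) ≤ K := by rw [hKdef]; positivity
        have := mul_le_mul_of_nonneg_left hs0 hK0
        nlinarith [mul_nonneg hK0 hs0]
      have hcomb2 : (m : ℝ) ≤ 5 * ((2:ℝ) ^ (2 * s) * (2:ℝ) ^ (K * s)) := by linarith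
      have h5 : (5:ℝ) ≤ (2:ℝ) ^ (3 * s) := by
        calc (5:ℝ) ≤ (2:ℝ) ^ (3:ℝ) := by
              rw [show (3:ℝ) = ((3:ℕ):ℝ) by norm_num, Real.rpow_natCast]; norm_num
          _ ≤ (2:ℝ) ^ (3 * s) := Real.rpow_le_rpow_of_exponent_le one_le_two (by linarith)
      calc (m:ℝ) ≤ 5 * ((2:ℝ) ^ (2 * s) * (2:ℝ) ^ (K * s)) := hcomb2
        _ ≤ (2:ℝ) ^ (3 * s) * ((2:ℝ) ^ (2 * s) * (2:ℝ) ^ (K * s)) := by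
            apply mul_le_mul_of_nonneg_right h5 (by positivity)
        _ = (2:ℝ) ^ (3 * s + (2 * s + K * s)) := by
            rw [← Real.rpow_add (by norm_num), ← Real.rpow_add (by norm_num)]
        _ ≤ (2:ℝ) ^ (C * s) := by
            apply Real.rpow_le_rpow_of_exponent_le one_le_two
            have heq : (3:ℝ) * s + (2 * s + K * s) = (K + 5) * s := by ring
            rw [heq]
            apply mul_le_mul_of_nonneg_right ?_ hs0
            rw [hCdef, hKdef]
            linarith
    -- build the sets
    refine ⟨T.card, ?_, fun i => (A.image (· + ((T.equivFin.symm i : ℤ)))) ∩ Finset.Icc 1 N,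
      fun i => ⟨Finset.inter_subset_right, ?_⟩, ?_⟩
    · calc (T.card : ℝ) ≤ m := by exact_mod_cast hT1
        _ ≤ (2:ℝ) ^ (C * s) := hmbound
    · apply isFree_mono ?_ (isFree_translate ((T.equivFin.symm i : ℤ)) hA2)
      intro v hv
      rw [Finset.coe_inter, Set.mem_inter_iff] at hv
      obtain ⟨hv1, -⟩ := hv
      rw [Finset.mem_coe, Finset.mem_image] at hv1
      obtain ⟨a, ha, rfl⟩ := hv1
      exact ⟨a, ha, rfl⟩
    · ext v
      simp only [Finset.mem_biUnion, Finset.mem_univ, true_and, Finset.mem_inter]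
      constructor
      · rintro ⟨i, -, hv⟩
        exact hv
      · intro hv
        obtain ⟨t, ht, hta⟩ := hT2 v hv
        refine ⟨T.equivFin ⟨t, ht⟩, ?_, hv⟩
        rw [Finset.mem_image]
        refine ⟨v - t, ?_, ?_⟩
        · simpa [Equiv.symm_apply_apply] using hta
        · simp [Equiv.symm_apply_apply]
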